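/- Consider the points x₀=(0,0), x₂=ε(1,0), x₄=ε(θ,1) in ℝ² and a C³ function h with h(xᵢ) = xᵢ·∇h(0) + ½ xᵢᵀ∇²h(0)xᵢ + O(ε³). Define yᵢ = (xᵢ, h(xᵢ)) ∈ ℝ³ and v(K) = ε⁻² (y₂ - y₀) × (y₄ - y₀). Let x₅ = ε(θ-1, 1), y₅ = (x₅, h(x₅)) and v(K₃) = ε⁻² (y₄ - y₀) × (y₅ - y₀). Then |v(K) - v(K₃)|² = ε²( θ²|(θ-1)∂₁₁h(0) + ∂₁₂h(0)|² + |(θ-1)∂₁₁h(0) + ∂₁₂h(0)|² ) + O(ε³). -/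

import Mathlib

open Matrix

/-- The lift of a point of the plane onto the graph of `h`. -/
noncomputable def liftPt (h : (Fin 2 → ℝ) → ℝ) (x : Fin 2 → ℝ) : Fin 3 → ℝ :=
  ![x 0, x 1, h x]

set_option maxHeartbeats 8000000 in
/-- The Taylor expansion computation for the normals of the triangles `K` (with vertices
over `x₀ = (0,0)`, `x₂ = ε(1,0)`, `x₄ = ε(θ,1)`) and `K₃` (with vertices over
`x₀, x₄, x₅ = ε(θ-1,1)`): writing `v(K) = ε⁻²(y₂-y₀)×(y₄-y₀)` and
`v(K₃) = ε⁻²(y₄-y₀)×(y₅-y₀)` for the lifted points `yᵢ = (xᵢ, h(xᵢ))`, one has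
`|v(K) - v(K₃)|² = ε²(θ²|(θ-1)∂₁₁h(0) + ∂₁₂h(0)|² + |(θ-1)∂₁₁h(0) + ∂₁₂h(0)|²) + O(ε³)`. -/
theorem normal_difference_taylor_expansion
    (θ : ℝ) (h : (Fin 2 → ℝ) → ℝ) (hsmooth : ContDiff ℝ 3 h)
    (p : Fin 2 → ℝ) (H : Matrix (Fin 2) (Fin 2) ℝ) (hsymm : H.IsSymm)
    -- `p = ∇h(0)`, `H = ∇²h(0)`: second-order Taylor expansion of `h` at `0`
    (htaylor : ∃ C₀ > (0 : ℝ), ∀ x : Fin 2 → ℝ, ‖x‖ ≤ 1 →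
      |h x - (p ⬝ᵥ x + (1 / 2) * (x ⬝ᵥ (H *ᵥ x)))| ≤ C₀ * ‖x‖ ^ 3) :
    ∃ C > (0 : ℝ), ∀ ε : ℝ, 0 < ε → ε ≤ 1 →
      abs ((((ε ^ 2)⁻¹ • (crossProduct (liftPt h (ε • ![1, 0]) - liftPt h 0)
              (liftPt h (ε • ![θ, 1]) - liftPt h 0)) -
            (ε ^ 2)⁻¹ • (crossProduct (liftPt h (ε • ![θ, 1]) - liftPt h 0)
              (liftPt h (ε • ![θ - 1, 1]) - liftPt h 0))) ⬝ᵥ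
          ((ε ^ 2)⁻¹ • (crossProduct (liftPt h (ε • ![1, 0]) - liftPt h 0)
              (liftPt h (ε • ![θ, 1]) - liftPt h 0)) -
            (ε ^ 2)⁻¹ • (crossProduct (liftPt h (ε • ![θ, 1]) - liftPt h 0)
              (liftPt h (ε • ![θ - 1, 1]) - liftPt h 0))) -
        ε ^ 2 * (θ ^ 2 * ((θ - 1) * H 0 0 + H 0 1) ^ 2 +
          ((θ - 1) * H 0 0 + H 0 1) ^ 2))) ≤ C * ε ^ 3 := by
  classical
  obtain ⟨C₀, hC₀, hT⟩ := htaylor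
  have h0 : h 0 = 0 := by
    have := hT 0 (by simp)
    simpa using this
  set q : (Fin 2 → ℝ) → ℝ := fun x => p ⬝ᵥ x + (1 / 2) * (x ⬝ᵥ (H *ᵥ x)) with hqdef
  set r : (Fin 2 → ℝ) → ℝ := fun x => h x - q x with hrdef
  have hqcont : Continuous q := by
    rw [hqdef]
    simp only [Matrix.mulVec, dotProduct, Fin.sum_univ_two]
    fun_prop
  have hrcont : Continuous r := hsmooth.continuous.sub hqcont
  set RR : ℝ := ‖![(1:ℝ), 0]‖ + ‖![θ, 1]‖ + ‖![θ - 1, 1]‖ with hRRdef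
  obtain ⟨M, hM⟩ := (isCompact_closedBall (0 : Fin 2 → ℝ) RR).exists_bound_of_continuousOn
    hrcont.continuousOn
  set C₁ : ℝ := max C₀ (max M 1) with hC₁def
  have hC₁pos : 0 < C₁ :=
    lt_of_lt_of_le one_pos ((le_max_right M 1).trans (le_max_right _ _))
  have hrb : ∀ x : Fin 2 → ℝ, ‖x‖ ≤ RR → |r x| ≤ C₁ * ‖x‖ ^ 3 := by
    intro x hx
    by_cases h1 : ‖x‖ ≤ 1
    · have := hT x h1
      have hx3 : (0:ℝ) ≤ ‖x‖ ^ 3 := by positivity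
      calc |r x| ≤ C₀ * ‖x‖ ^ 3 := this
        _ ≤ C₁ * ‖x‖ ^ 3 := by
            apply mul_le_mul_of_nonneg_right (le_max_left _ _) hx3
    · have h1' : (1:ℝ) ≤ ‖x‖ := le_of_not_ge h1
      have hmem : x ∈ Metric.closedBall (0 : Fin 2 → ℝ) RR := by
        simpa [Metric.mem_closedBall, dist_zero_right] using hx
      have hMx : |r x| ≤ M := by simpa using hM x hmem
      have hMC : M ≤ C₁ := (le_max_left M 1).trans (le_max_right _ _)
      have h13 : (1:ℝ) ≤ ‖x‖ ^ 3 := by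
        simpa using pow_le_pow_left₀ (by norm_num : (0:ℝ) ≤ 1) h1' 3
      calc |r x| ≤ M := hMx
        _ ≤ C₁ := hMC
        _ = C₁ * 1 := (mul_one _).symm
        _ ≤ C₁ * ‖x‖ ^ 3 := by
            apply mul_le_mul_of_nonneg_left h13 hC₁pos.le
  set A : ℝ := (θ - 1) * H 0 0 + H 0 1 with hAdef
  set B : ℝ := C₁ * (‖![(1:ℝ), 0]‖ ^ 3 + ‖![θ, 1]‖ ^ 3 + ‖![θ - 1, 1]‖ ^ 3) with hBdef
  have hB0 : 0 ≤ B := by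
    apply mul_nonneg hC₁pos.le
    positivity
  refine ⟨(1 + θ ^ 2) * (B ^ 2 + 2 * |A| * B) + 1, ?_, ?_⟩
  · have h1 : (0:ℝ) ≤ B ^ 2 + 2 * |A| * B := by nlinarith [hB0, abs_nonneg A, sq_nonneg B]
    have h2 : (0:ℝ) ≤ (1 + θ ^ 2) * (B ^ 2 + 2 * |A| * B) :=
      mul_nonneg (by positivity) h1
    linarith
  intro ε hε hε1
  -- bound for the remainders at rescaled points
  have hbv : ∀ v : Fin 2 → ℝ, ‖v‖ ≤ RR → |r (ε • v)| ≤ C₁ * ‖v‖ ^ 3 * ε ^ 3 := by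
    intro v hv
    have h1 : ‖ε • v‖ = ε * ‖v‖ := by
      rw [norm_smul, Real.norm_eq_abs, abs_of_pos hε]
    have h2 : ‖ε • v‖ ≤ RR := by
      rw [h1]
      nlinarith [norm_nonneg v]
    have := hrb _ h2
    rw [h1] at this
    calc |r (ε • v)| ≤ C₁ * (ε * ‖v‖) ^ 3 := this
      _ = C₁ * ‖v‖ ^ 3 * ε ^ 3 := by ring
  have hv1 : ‖![(1:ℝ), 0]‖ ≤ RR := by
    rw [hRRdef]; nlinarith [norm_nonneg ![θ, (1:ℝ)], norm_nonneg ![θ - 1, (1:ℝ)]]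
  have hv2 : ‖![θ, (1:ℝ)]‖ ≤ RR := by
    rw [hRRdef]; nlinarith [norm_nonneg ![(1:ℝ), 0], norm_nonneg ![θ - 1, (1:ℝ)]]
  have hv3 : ‖![θ - 1, (1:ℝ)]‖ ≤ RR := by
    rw [hRRdef]; nlinarith [norm_nonneg ![(1:ℝ), 0], norm_nonneg ![θ, (1:ℝ)]]
  set ha : ℝ := h (ε • ![1, 0]) with hadef
  set hb : ℝ := h (ε • ![θ, 1]) with hbdef
  set hc : ℝ := h (ε • ![θ - 1, 1]) with hcdef
  set R : ℝ := r (ε • ![1, 0]) + r (ε • ![θ - 1, 1]) - r (ε • ![θ, 1]) with hRdef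
  have hRb : |R| ≤ B * ε ^ 3 := by
    have b1 := hbv _ hv1
    have b2 := hbv _ hv2
    have b3 := hbv _ hv3
    have t1 : |R| ≤ |r (ε • ![1, 0]) + r (ε • ![θ - 1, 1])| + |r (ε • ![θ, 1])| :=
      abs_sub _ _
    have t2 := abs_add_le (r (ε • ![(1:ℝ), 0])) (r (ε • ![θ - 1, (1:ℝ)]))
    have : B * ε ^ 3 = C₁ * ‖![(1:ℝ), 0]‖ ^ 3 * ε ^ 3 + C₁ * ‖![θ, (1:ℝ)]‖ ^ 3 * ε ^ 3
        + C₁ * ‖![θ - 1, (1:ℝ)]‖ ^ 3 * ε ^ 3 := by rw [hBdef]; ring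
    linarith
  -- the lifted vectors
  have e0 : liftPt h 0 = 0 := by
    funext i; fin_cases i <;> simp [liftPt, h0]
  have e2 : liftPt h (ε • ![1, 0]) = ![ε, 0, ha] := by
    funext i; fin_cases i <;> simp [liftPt, hadef]
  have e4 : liftPt h (ε • ![θ, 1]) = ![ε * θ, ε, hb] := by
    funext i; fin_cases i <;> simp [liftPt, hbdef, mul_comm]
  have e5 : liftPt h (ε • ![θ - 1, 1]) = ![ε * (θ - 1), ε, hc] := by
    funext i; fin_cases i <;> simp [liftPt, hcdef, mul_comm]
  have hε2 : (ε:ℝ) ^ 2 ≠ 0 := by positivity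
  have key : (((ε ^ 2)⁻¹ • (crossProduct (liftPt h (ε • ![1, 0]) - liftPt h 0)
              (liftPt h (ε • ![θ, 1]) - liftPt h 0)) -
            (ε ^ 2)⁻¹ • (crossProduct (liftPt h (ε • ![θ, 1]) - liftPt h 0)
              (liftPt h (ε • ![θ - 1, 1]) - liftPt h 0))) ⬝ᵥ
          ((ε ^ 2)⁻¹ • (crossProduct (liftPt h (ε • ![1, 0]) - liftPt h 0)
              (liftPt h (ε • ![θ, 1]) - liftPt h 0)) -
            (ε ^ 2)⁻¹ • (crossProduct (liftPt h (ε • ![θ, 1]) - liftPt h 0)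
              (liftPt h (ε • ![θ - 1, 1]) - liftPt h 0))))
      = (1 + θ ^ 2) * (ha + hc - hb) ^ 2 / ε ^ 2 := by
    rw [e0, e2, e4, e5]
    simp only [sub_zero, cross_apply, dotProduct, Fin.sum_univ_three, Pi.smul_apply,
      Pi.sub_apply, Matrix.cons_val_zero, Matrix.cons_val_one, Matrix.head_cons,
      Matrix.cons_val_two, Matrix.tail_cons, smul_eq_mul]
    field_simp
    ring
  -- Taylor expansion of the key quantity
  have h10 : H 1 0 = H 0 1 := hsymm.apply 0 1
  have hqv : ∀ v : Fin 2 → ℝ, q (ε • v) = ε * (p 0 * v 0 + p 1 * v 1)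
      + (1/2) * ε ^ 2 * (v 0 * (H 0 0 * v 0 + H 0 1 * v 1) + v 1 * (H 1 0 * v 0 + H 1 1 * v 1)) := by
    intro v
    rw [hqdef]
    simp only [Matrix.mulVec, dotProduct, Fin.sum_univ_two, Pi.smul_apply, smul_eq_mul]
    ring
  have hS : ha + hc - hb = -(ε ^ 2 * A) + R := by
    have ea : ha = r (ε • ![1, 0]) + q (ε • ![1, 0]) := by
      rw [hrdef]; simp [hadef]
    have eb : hb = r (ε • ![θ, 1]) + q (ε • ![θ, 1]) := by
      rw [hrdef]; simp [hbdef]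
    have ec : hc = r (ε • ![θ - 1, 1]) + q (ε • ![θ - 1, 1]) := by
      rw [hrdef]; simp [hcdef]
    rw [ea, eb, ec, hqv, hqv, hqv, hRdef, hAdef]
    simp only [Matrix.cons_val_zero, Matrix.cons_val_one, Matrix.head_cons]
    rw [h10]
    ring
  rw [key, hS]
  have expand : (1 + θ ^ 2) * (-(ε ^ 2 * A) + R) ^ 2 / ε ^ 2 -
      ε ^ 2 * (θ ^ 2 * A ^ 2 + A ^ 2) = (1 + θ ^ 2) * (R ^ 2 / ε ^ 2 - 2 * A * R) := by
    field_simp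
    ring
  rw [expand, abs_mul, abs_of_pos (by positivity : (0:ℝ) < 1 + θ ^ 2)]
  have hR2 : R ^ 2 / ε ^ 2 ≤ B ^ 2 * ε ^ 4 := by
    rw [div_le_iff₀ (by positivity : (0:ℝ) < ε ^ 2)]
    have hsq : R ^ 2 ≤ (B * ε ^ 3) ^ 2 := by
      rw [← sq_abs R]
      exact pow_le_pow_left₀ (abs_nonneg R) hRb 2
    have heq : (B * ε ^ 3) ^ 2 = B ^ 2 * ε ^ 4 * ε ^ 2 := by ring
    linarith
  have hAR : |2 * A * R| ≤ 2 * |A| * (B * ε ^ 3) := by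
    rw [abs_mul, abs_mul, abs_two]
    gcongr
  have hXb : |R ^ 2 / ε ^ 2 - 2 * A * R| ≤ (B ^ 2 + 2 * |A| * B) * ε ^ 3 := by
    have t1 : |R ^ 2 / ε ^ 2 - 2 * A * R| ≤ |R ^ 2 / ε ^ 2| + |2 * A * R| := abs_sub _ _
    have t2 : |R ^ 2 / ε ^ 2| = R ^ 2 / ε ^ 2 := abs_of_nonneg (by positivity)
    have t3 : B ^ 2 * ε ^ 4 ≤ B ^ 2 * ε ^ 3 := by
      nlinarith [mul_le_mul_of_nonneg_left hε1 (mul_nonneg (sq_nonneg B) (pow_pos hε 3).le)]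
    linarith
  calc (1 + θ ^ 2) * |R ^ 2 / ε ^ 2 - 2 * A * R|
      ≤ (1 + θ ^ 2) * ((B ^ 2 + 2 * |A| * B) * ε ^ 3) := by
        apply mul_le_mul_of_nonneg_left hXb (by positivity)
    _ ≤ ((1 + θ ^ 2) * (B ^ 2 + 2 * |A| * B) + 1) * ε ^ 3 := by
        nlinarith [pow_pos hε 3]
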